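/- Let S' be a finite set of states containing a distinguished goal state g, and let T̂ be the operator on functions V : S' → ℝ with V(g) = 0 defined by T̂V(s) = Σ_a π(a|s)(ĉ(s,a) + Σ_{s'} P̃(s'|s,a)V(s')), where π(·|s) is a probability distribution over a finite action set, ĉ(g,a) = 0, P̃(·|g,a) = δ_g, and for each (s,a) with s ≠ g, P̃(s'|s,a) = (n(s,a)/(n(s,a)+1))·P̂(s'|s,a) + 𝟙[s'=g]/(n(s,a)+1) for some probability distribution P̂(·|s,a) and nonnegative integer n(s,a). Then T̂ is a ρ-contraction in the sup-norm on {V : V(g) = 0}, where ρ = max_{s≠g, a} n(s,a)/(n(s,a)+1) < 1; that is, ‖T̂V₁ − T̂V₂‖_∞ ≤ ρ‖V₁ − V₂‖_∞ for all V₁, V₂ with V₁(g) = V₂(g) = 0. -/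

import Mathlib

open Finset

/-- The empirical Bellman evaluation operator with the goal-perturbed kernel is a
`ρ`-contraction in sup-norm on `{V : V g = 0}`, where
`ρ = max_{s ≠ g, a} n(s,a)/(n(s,a)+1) < 1`. -/
theorem stmt_1 {S A : Type*} [Fintype S] [Fintype A] [DecidableEq S]
    (g : S)
    (π : S → A → ℝ) (hπ0 : ∀ s a, 0 ≤ π s a) (hπ1 : ∀ s, ∑ a, π s a = 1)
    (chat : S → A → ℝ) (hcg : ∀ a, chat g a = 0)
    (Phat : S → A → S → ℝ) (hPhat0 : ∀ s a s', 0 ≤ Phat s a s')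
    (hPhat1 : ∀ s a, ∑ s', Phat s a s' = 1)
    (n : S → A → ℕ)
    (Ptil : S → A → S → ℝ)
    (hPtil : ∀ s a s', s ≠ g →
      Ptil s a s' = ((n s a : ℝ) / ((n s a : ℝ) + 1)) * Phat s a s'
        + (if s' = g then (1 : ℝ) else 0) / ((n s a : ℝ) + 1))
    (hPtilg : ∀ (a : A) (s' : S), Ptil g a s' = if s' = g then (1 : ℝ) else 0)
    (ρ : ℝ)
    (hprod : (((Finset.univ.filter (fun s : S => s ≠ g)) ×ˢ
        (Finset.univ : Finset A))).Nonempty)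
    (hρ : ρ = ((Finset.univ.filter (fun s : S => s ≠ g)) ×ˢ
        (Finset.univ : Finset A)).sup' hprod
        (fun q => (n q.1 q.2 : ℝ) / ((n q.1 q.2 : ℝ) + 1))) :
    ρ < 1 ∧
    ∀ V₁ V₂ : S → ℝ, V₁ g = 0 → V₂ g = 0 →
      (Finset.univ : Finset S).sup' ⟨g, Finset.mem_univ g⟩
          (fun s => |(∑ a, π s a * (chat s a + ∑ s', Ptil s a s' * V₁ s'))
            - (∑ a, π s a * (chat s a + ∑ s', Ptil s a s' * V₂ s'))|)
        ≤ ρ * (Finset.univ : Finset S).sup' ⟨g, Finset.mem_univ g⟩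
            (fun s => |V₁ s - V₂ s|) := by
  have hρ0 : 0 ≤ ρ := by
    obtain ⟨q, hq⟩ := hprod
    have h1 : (0:ℝ) ≤ (n q.1 q.2 : ℝ) / ((n q.1 q.2 : ℝ) + 1) := by positivity
    have h2 := Finset.le_sup' (f := fun q : S × A => (n q.1 q.2 : ℝ) / ((n q.1 q.2 : ℝ) + 1)) hq
    rw [hρ]; exact le_trans h1 h2
  have hρ1 : ρ < 1 := by
    rw [hρ, Finset.sup'_lt_iff]
    intro q _
    rw [div_lt_one (by positivity)]
    linarith
  refine ⟨hρ1, ?_⟩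
  intro V₁ V₂ h1 h2
  set M := (Finset.univ : Finset S).sup' ⟨g, Finset.mem_univ g⟩ (fun s => |V₁ s - V₂ s|) with hM
  have hM0 : 0 ≤ M := le_trans (abs_nonneg (V₁ g - V₂ g)) (Finset.le_sup' (fun s => |V₁ s - V₂ s|) (Finset.mem_univ g))
  have hWb : ∀ s, |V₁ s - V₂ s| ≤ M := fun s => Finset.le_sup' (fun s => |V₁ s - V₂ s|) (Finset.mem_univ s)
  apply Finset.sup'_le
  intro s _
  by_cases hs : s = g
  · rw [hs]
    have e : ∀ (V : S → ℝ), V g = 0 → ∀ a, ∑ s', Ptil g a s' * V s' = 0 := by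
      intro V hV a
      rw [Finset.sum_eq_single g]
      · simp [hPtilg, hV]
      · intro b _ hb; simp [hPtilg, hb]
      · simp
    have : (∑ a, π g a * (chat g a + ∑ s', Ptil g a s' * V₁ s'))
        = (∑ a, π g a * (chat g a + ∑ s', Ptil g a s' * V₂ s')) := by
      apply Finset.sum_congr rfl
      intro a _
      rw [e V₁ h1 a, e V₂ h2 a]
    rw [this, sub_self, abs_zero]
    positivity
  · -- s ≠ g
    have hkey : ∀ a : A, |(∑ s', Ptil s a s' * V₁ s') - (∑ s', Ptil s a s' * V₂ s')| ≤ ρ * M := by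
      intro a
      have hmem : (s, a) ∈ ((Finset.univ.filter (fun s : S => s ≠ g)) ×ˢ
          (Finset.univ : Finset A)) := by
        simp [Finset.mem_product, hs]
      have hle : (n s a : ℝ) / ((n s a : ℝ) + 1) ≤ ρ := by
        rw [hρ]
        exact Finset.le_sup' (f := fun q : S × A => (n q.1 q.2 : ℝ) / ((n q.1 q.2 : ℝ) + 1)) hmem
      have hsum : (∑ s', Ptil s a s' * V₁ s') - (∑ s', Ptil s a s' * V₂ s')
          = ((n s a : ℝ) / ((n s a : ℝ) + 1)) * ∑ s', Phat s a s' * (V₁ s' - V₂ s') := by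
        rw [← Finset.sum_sub_distrib, Finset.mul_sum]
        apply Finset.sum_congr rfl
        intro s' _
        rw [hPtil s a s' hs]
        by_cases hsg : s' = g
        · subst hsg; rw [h1, h2]; ring
        · simp [hsg]; ring
      rw [hsum, abs_mul, abs_of_nonneg (by positivity : (0:ℝ) ≤ (n s a : ℝ) / ((n s a : ℝ) + 1))]
      have habs : |∑ s', Phat s a s' * (V₁ s' - V₂ s')| ≤ M := by
        calc |∑ s', Phat s a s' * (V₁ s' - V₂ s')|
            ≤ ∑ s', |Phat s a s' * (V₁ s' - V₂ s')| := Finset.abs_sum_le_sum_abs _ _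
          _ ≤ ∑ s', Phat s a s' * M := by
              apply Finset.sum_le_sum
              intro s' _
              rw [abs_mul, abs_of_nonneg (hPhat0 s a s')]
              exact mul_le_mul_of_nonneg_left (hWb s') (hPhat0 s a s')
          _ = M := by rw [← Finset.sum_mul, hPhat1, one_mul]
      exact mul_le_mul hle habs (abs_nonneg _) hρ0
    calc |(∑ a, π s a * (chat s a + ∑ s', Ptil s a s' * V₁ s'))
          - (∑ a, π s a * (chat s a + ∑ s', Ptil s a s' * V₂ s'))|
        = |∑ a, π s a * ((∑ s', Ptil s a s' * V₁ s') - (∑ s', Ptil s a s' * V₂ s'))| := by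
          rw [← Finset.sum_sub_distrib]
          congr 1
          apply Finset.sum_congr rfl
          intro a _; ring
      _ ≤ ∑ a, |π s a * ((∑ s', Ptil s a s' * V₁ s') - (∑ s', Ptil s a s' * V₂ s'))| :=
          Finset.abs_sum_le_sum_abs _ _
      _ ≤ ∑ a, π s a * (ρ * M) := by
          apply Finset.sum_le_sum
          intro a _
          rw [abs_mul, abs_of_nonneg (hπ0 s a)]
          exact mul_le_mul_of_nonneg_left (hkey a) (hπ0 s a)
      _ = ρ * M := by rw [← Finset.sum_mul, hπ1, one_mul]
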